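/- For the Horowitz-Myers geon metric, the function x := 4^{1/n}(r^{n/2} − √(r^n − 1))^{2/n} is a special defining function: in the coordinate x the metric takes Gaussian normal form g = x^{−2}(dx² + h_x) with |dx|²_{x²g} = 1, and h_x = (1 + x^n/4)^{4/n}[((1 − x^n/4)/(1 + x^n/4))² dξ² + ∑_{i=3}^n dφ_i²]. -/

import Mathlib

open Real Set

/-- For the Horowitz-Myers geon metric
`g = dr²/(r²(1−r^{−n})) + r²((1−r^{−n})dξ² + ∑ dφ_i²)`, the function
`x := 4^{1/n}(r^{n/2} − √(r^n − 1))^{2/n}` is a special defining function: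
`|dx|²_{x²g} = 1`, i.e. `(dx/dr)² · r²(1−r^{−n}) = x²`, and in the coordinate `x`
the metric takes the Gaussian normal form `g = x^{−2}(dx² + h_x)` with
`h_x = (1 + x^n/4)^{4/n}[((1 − x^n/4)/(1 + x^n/4))² dξ² + ∑ dφ_i²]`, i.e. the
`ξξ`-component `x²·r²(1−r^{−n})` and the `φφ`-components `x²·r²` of `h_x = x²·(angular
part of g)` are given by the stated formulas. -/
theorem horowitz_myers_special_defining_function
    (n : ℕ) (hn : 3 ≤ n)
    (X : ℝ → ℝ)
    (hX : ∀ r : ℝ, X r =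
      (4 : ℝ) ^ ((1 : ℝ) / n) * (r ^ ((n : ℝ) / 2) - Real.sqrt (r ^ n - 1)) ^ ((2 : ℝ) / n)) :
    ∀ r : ℝ, 1 < r →
      ((deriv X r) ^ 2 * (r ^ 2 * (1 - (r ^ n)⁻¹)) = (X r) ^ 2) ∧
      ((X r) ^ 2 * r ^ 2 = (1 + (X r) ^ n / 4) ^ ((4 : ℝ) / n)) ∧
      ((X r) ^ 2 * (r ^ 2 * (1 - (r ^ n)⁻¹)) =
        (1 + (X r) ^ n / 4) ^ ((4 : ℝ) / n) *
          ((1 - (X r) ^ n / 4) / (1 + (X r) ^ n / 4)) ^ 2) := by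
  have hnpos : (0:ℝ) < n := by exact_mod_cast (by omega : 0 < n)
  have hn0 : (n:ℝ) ≠ 0 := ne_of_gt hnpos
  have pow_inj : ∀ a b : ℝ, 0 ≤ a → 0 ≤ b → a ^ n = b ^ n → a = b := by
    intro a b ha hb hab
    have h1 : ((a ^ n : ℝ)) ^ ((1:ℝ)/n) = a := by
      rw [← Real.rpow_natCast a n, ← Real.rpow_mul ha, mul_one_div, div_self hn0,
        Real.rpow_one]
    have h2 : ((b ^ n : ℝ)) ^ ((1:ℝ)/n) = b := by
      rw [← Real.rpow_natCast b n, ← Real.rpow_mul hb, mul_one_div, div_self hn0,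
        Real.rpow_one]
    rw [← h1, ← h2, hab]
  have key : ∀ a : ℝ, 0 ≤ a → ∀ c : ℝ, (a ^ (c / (n:ℝ))) ^ n = a ^ c := by
    intro a ha c
    rw [← Real.rpow_natCast (a ^ (c / (n:ℝ))) n, ← Real.rpow_mul ha,
      div_mul_cancel₀ _ hn0]
  intro r hr
  have hr0 : (0:ℝ) < r := lt_trans one_pos hr
  have hrn1 : 1 < r ^ n := one_lt_pow₀ hr (by omega)
  obtain ⟨t, htdef⟩ : ∃ t : ℝ, r ^ ((n:ℝ)/2) = t := ⟨_, rfl⟩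
  obtain ⟨s, hsdef⟩ : ∃ s : ℝ, Real.sqrt (r ^ n - 1) = s := ⟨_, rfl⟩
  have ht0 : 0 < t := htdef ▸ Real.rpow_pos_of_pos hr0 _
  have hs0 : 0 < s := hsdef ▸ Real.sqrt_pos.mpr (by linarith)
  have ht2 : t ^ 2 = r ^ n := by
    rw [← htdef, ← Real.rpow_natCast (r ^ ((n:ℝ)/2)) 2, ← Real.rpow_mul hr0.le]
    norm_num
  have hs2 : s ^ 2 = r ^ n - 1 := by
    rw [← hsdef]; exact Real.sq_sqrt (by linarith)
  have hst : s < t := by nlinarith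
  obtain ⟨u, hudef⟩ : ∃ u : ℝ, t - s = u := ⟨_, rfl⟩
  have hu0 : 0 < u := by rw [← hudef]; linarith
  have hXr : X r = (4:ℝ) ^ ((1:ℝ)/n) * u ^ ((2:ℝ)/n) := by
    rw [hX r, htdef, hsdef, hudef]
  have hXpos : 0 < X r := by
    rw [hXr]
    positivity
  have hXn : (X r) ^ n = 4 * u ^ 2 := by
    rw [hXr, mul_pow]
    have h4 : ((4:ℝ) ^ ((1:ℝ)/n)) ^ n = 4 := by
      have := key 4 (by norm_num) 1
      simpa using this
    have hu : (u ^ ((2:ℝ)/n)) ^ n = u ^ 2 := by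
      have := key u hu0.le 2
      rw [this, ← Real.rpow_natCast u 2]
      norm_num
    rw [h4, hu]
  have h1p : 1 + (X r) ^ n / 4 = 2 * t * u := by
    rw [hXn, ← hudef]; nlinarith [hs2, ht2]
  have h1m : 1 - (X r) ^ n / 4 = 2 * s * u := by
    rw [hXn, ← hudef]; nlinarith [hs2, ht2]
  -- Claim 2
  have claim2 : (X r) ^ 2 * r ^ 2 = (1 + (X r) ^ n / 4) ^ ((4:ℝ) / n) := by
    apply pow_inj _ _ (by positivity) (Real.rpow_nonneg (by nlinarith) _)
    rw [h1p, key (2*t*u) (by positivity) 4]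
    have h4 : (2*t*u) ^ (4:ℝ) = (2*t*u) ^ (4:ℕ) := by
      rw [← Real.rpow_natCast (2*t*u) 4]; norm_num
    rw [h4, mul_pow, ← pow_mul, ← pow_mul, mul_comm 2 n, pow_mul, pow_mul, hXn, ← ht2]
    ring
  refine ⟨?_, claim2, ?_⟩
  · -- derivative claim
    have hinner : HasDerivAt (fun r' : ℝ => r' ^ ((n:ℝ)/2) - Real.sqrt (r' ^ n - 1))
        (((n:ℝ)/2) * r ^ ((n:ℝ)/2 - 1) - ((n:ℝ) * r ^ (n-1)) / (2 * s)) r := by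
      have h1 : HasDerivAt (fun r' : ℝ => r' ^ ((n:ℝ)/2)) (((n:ℝ)/2) * r ^ ((n:ℝ)/2 - 1)) r :=
        Real.hasDerivAt_rpow_const (Or.inl hr0.ne')
      have h2 : HasDerivAt (fun r' : ℝ => r' ^ n - 1) ((n:ℝ) * r ^ (n-1)) r :=
        (hasDerivAt_pow n r).sub_const 1
      have h3 : HasDerivAt (fun r' : ℝ => Real.sqrt (r' ^ n - 1))
          (((n:ℝ) * r ^ (n-1)) / (2 * Real.sqrt (r ^ n - 1))) r :=
        h2.sqrt (by nlinarith)
      rw [hsdef] at h3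
      exact h1.sub h3
    have hXd : HasDerivAt X
        ((4:ℝ) ^ ((1:ℝ)/n) *
          ((((n:ℝ)/2) * r ^ ((n:ℝ)/2 - 1) - ((n:ℝ) * r ^ (n-1)) / (2 * s)) * ((2:ℝ)/n)
            * u ^ ((2:ℝ)/n - 1))) r := by
      have hXfun : X = fun r' : ℝ =>
          (4:ℝ) ^ ((1:ℝ)/n) * (r' ^ ((n:ℝ)/2) - Real.sqrt (r' ^ n - 1)) ^ ((2:ℝ)/n) :=
        funext hX
      rw [hXfun]
      have hfr : r ^ ((n:ℝ)/2) - Real.sqrt (r ^ n - 1) = u := by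
        rw [htdef, hsdef, hudef]
      have := (hinner.rpow_const (p := (2:ℝ)/n) (Or.inl (by rw [hfr]; exact hu0.ne')))
      rw [hfr] at this
      exact this.const_mul _
    have hE : deriv X r = -(X r) * t / (r * s) := by
      rw [hXd.deriv]
      have hru : u ^ ((2:ℝ)/n - 1) = u ^ ((2:ℝ)/n) / u := by
        rw [Real.rpow_sub hu0, Real.rpow_one]
      have hrpow1 : r ^ ((n:ℝ)/2 - 1) = t / r := by
        rw [Real.rpow_sub hr0, Real.rpow_one, htdef]
      have hrpow2 : (r:ℝ) ^ (n - 1) = t ^ 2 / r := by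
        rw [eq_div_iff hr0.ne', ← pow_succ, Nat.sub_add_cancel (by omega), ht2]
      rw [hru, hrpow1, hrpow2, hXr]
      obtain ⟨c, hc⟩ : ∃ c : ℝ, (4:ℝ) ^ ((1:ℝ)/n) = c := ⟨_, rfl⟩
      obtain ⟨v, hv⟩ : ∃ v : ℝ, u ^ ((2:ℝ)/n) = v := ⟨_, rfl⟩
      rw [hc, hv, ← hudef]
      field_simp [sub_ne_zero.mpr hst.ne']
      ring
    rw [hE]
    have hinv : (r ^ n)⁻¹ = (t ^ 2)⁻¹ := by rw [ht2]
    rw [hinv]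
    have hs2' : s ^ 2 = t ^ 2 - 1 := by rw [hs2, ← ht2]
    have h1 : 1 - (t ^ 2)⁻¹ = s ^ 2 / t ^ 2 := by
      rw [hs2']; field_simp
    obtain ⟨A, hA⟩ : ∃ A : ℝ, X r = A := ⟨_, rfl⟩
    rw [h1, hA]
    field_simp
  · -- Claim 3
    rw [← claim2, h1m, h1p]
    have hratio : (2*s*u) / (2*t*u) = s / t := by
      rw [mul_comm (2*s) u, mul_comm (2*t) u, mul_div_mul_left _ _ hu0.ne']
      rw [mul_div_mul_left _ _ (two_ne_zero)]
    rw [hratio]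
    have hinv : (r ^ n)⁻¹ = (t ^ 2)⁻¹ := by rw [ht2]
    have hs2' : s ^ 2 = t ^ 2 - 1 := by rw [hs2, ← ht2]
    have h1 : 1 - (t ^ 2)⁻¹ = s ^ 2 / t ^ 2 := by
      rw [hs2']; field_simp
    rw [hinv, div_pow, h1]
    ring
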